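/- arXiv:1203.6630 — 3 statements merged into one kernel-verified Lean document; each statement's English description precedes it below -/
import Mathlib

section
/- In the two-channel power allocation model with λ₀ ≤ p₁ ≤ λ₁, R_l < R_h < 2R_l, λ₀ ≥ 0, β ∈ [0,1), suppose V : [0,1]² → ℝ satisfies the Bellman equation V = max{V_b,V₁,V₂} and each V_a (a ∈ {b,1,2}) is affine in each coordinate. Then V_b(p₁,λ₀) ≥ V₂(p₁,λ₀); in particular, the action B₂ (betting all power on channel 2) is never uniquely optimal at any belief of the form (p₁, λ₀). -/
/-- A function of two real variables is affine in each coordinate separately. -/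
def AffineInEach (F : ℝ → ℝ → ℝ) : Prop :=
  (∀ y, ∃ a c, ∀ x, F x y = a + c * x) ∧ (∀ x, ∃ a c, ∀ y, F x y = a + c * y)

/-- Lemma 6: On the border `p₂ = λ₀`, the balanced action dominates
betting on channel 2: `V_b(p₁,λ₀) ≥ V₂(p₁,λ₀)`. -/
theorem balanced_dominates_B2_on_lower_border (l0 l1 β Rl Rh : ℝ)
    (hl0 : l0 ∈ Set.Icc (0:ℝ) 1) (hl1 : l1 ∈ Set.Icc (0:ℝ) 1) (hll : l0 ≤ l1)
    (hRl : 0 < Rl) (hRlh : Rl < Rh) (hRh : Rh < 2 * Rl)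
    (hβ0 : 0 ≤ β) (hβ1 : β < 1)
(T : ℝ → ℝ) (hT : ∀ p, T p = l0 + (l1 - l0) * p)
    (Vb V1 V2 V : ℝ → ℝ → ℝ)
    (hVb : ∀ p1 p2, Vb p1 p2 = p1 * Rl + p2 * Rl +
      β * ((1 - p1) * (1 - p2) * V l0 l0 + p1 * (1 - p2) * V l1 l0 +
        (1 - p1) * p2 * V l0 l1 + p1 * p2 * V l1 l1))
    (hV1 : ∀ p1 p2, V1 p1 p2 = p1 * Rh +
      β * ((1 - p1) * V l0 (T p2) + p1 * V l1 (T p2)))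
    (hV2 : ∀ p1 p2, V2 p1 p2 = p2 * Rh +
      β * ((1 - p2) * V (T p1) l0 + p2 * V (T p1) l1))
    (hV : ∀ p1 p2, V p1 p2 = max (max (Vb p1 p2) (V1 p1 p2)) (V2 p1 p2))
    (hab : AffineInEach Vb) (ha1 : AffineInEach V1) (ha2 : AffineInEach V2)
    (p1 : ℝ) (hp1 : p1 ∈ Set.Icc l0 l1) :
    Vb p1 l0 ≥ V2 p1 l0 := by
  obtain ⟨hl00, hl01⟩ := hl0
  obtain ⟨hl10, hl11⟩ := hl1
  obtain ⟨hp1l, hp1r⟩ := hp1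
  have hp10 : 0 ≤ p1 := le_trans hl00 hp1l
  have hp11 : p1 ≤ 1 := le_trans hp1r hl11
  have h01 : 0 ≤ 1 - p1 := by linarith
  have key : ∀ y, V (T p1) y ≤ (1 - p1) * V l0 y + p1 * V l1 y := by
    intro y
    obtain ⟨ab, cb, hb⟩ := hab.1 y
    obtain ⟨a1, c1, h1⟩ := ha1.1 y
    obtain ⟨a2, c2, h2⟩ := ha2.1 y
    have hTc : T p1 = (1 - p1) * l0 + p1 * l1 := by rw [hT]; ring
    rw [hV, hV, hV, hb, h1, h2, hb, h1, h2, hb, h1, h2]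
    have e1 : ab + cb * T p1 = (1 - p1) * (ab + cb * l0) + p1 * (ab + cb * l1) := by
      rw [hTc]; ring
    have e2 : a1 + c1 * T p1 = (1 - p1) * (a1 + c1 * l0) + p1 * (a1 + c1 * l1) := by
      rw [hTc]; ring
    have e3 : a2 + c2 * T p1 = (1 - p1) * (a2 + c2 * l0) + p1 * (a2 + c2 * l1) := by
      rw [hTc]; ring
    rw [e1, e2, e3]
    refine max_le (max_le ?_ ?_) ?_ <;>
      refine add_le_add (mul_le_mul_of_nonneg_left ?_ h01)
        (mul_le_mul_of_nonneg_left ?_ hp10)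
    · exact le_max_of_le_left (le_max_left _ _)
    · exact le_max_of_le_left (le_max_left _ _)
    · exact le_max_of_le_left (le_max_right _ _)
    · exact le_max_of_le_left (le_max_right _ _)
    · exact le_max_right _ _
    · exact le_max_right _ _
  have k0 := key l0
  have k1 := key l1
  have hb0 : 0 ≤ 1 - l0 := by linarith
  rw [hVb, hV2]
  nlinarith [mul_le_mul_of_nonneg_left k0 (mul_nonneg hβ0 hb0),
    mul_le_mul_of_nonneg_left k1 (mul_nonneg hβ0 hl00)
    , mul_nonneg hl00 (by linarith : (0:ℝ) ≤ 2*Rl - Rh), mul_nonneg (by linarith : (0:ℝ) ≤ p1 - l0) hRl.le]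
end

section
/- Under the hypotheses of the two-channel model (λ₀ ≤ p₁ ≤ λ₁, 0 < R_l < R_h < 2R_l, β ∈ [0,1), V satisfying the Bellman equation with coordinatewise-affine action values), V_b(p₁,λ₁) ≥ V₁(p₁,λ₁): the action B₁ (betting all power on channel 1) is never uniquely optimal at beliefs of the form (p₁, λ₁). -/
/-- On the border `p₂ = λ₁`, the balanced action dominates betting
on channel 1: `V_b(p₁,λ₁) ≥ V₁(p₁,λ₁)`. -/
theorem balanced_dominates_B1_on_upper_border (l0 l1 β Rl Rh : ℝ)
    (hl0 : l0 ∈ Set.Icc (0:ℝ) 1) (hl1 : l1 ∈ Set.Icc (0:ℝ) 1) (hll : l0 ≤ l1)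
    (hRl : 0 < Rl) (hRlh : Rl < Rh) (hRh : Rh < 2 * Rl)
    (hβ0 : 0 ≤ β) (hβ1 : β < 1)
(T : ℝ → ℝ) (hT : ∀ p, T p = l0 + (l1 - l0) * p)
    (Vb V1 V2 V : ℝ → ℝ → ℝ)
    (hVb : ∀ p1 p2, Vb p1 p2 = p1 * Rl + p2 * Rl +
      β * ((1 - p1) * (1 - p2) * V l0 l0 + p1 * (1 - p2) * V l1 l0 +
        (1 - p1) * p2 * V l0 l1 + p1 * p2 * V l1 l1))
    (hV1 : ∀ p1 p2, V1 p1 p2 = p1 * Rh +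
      β * ((1 - p1) * V l0 (T p2) + p1 * V l1 (T p2)))
    (hV2 : ∀ p1 p2, V2 p1 p2 = p2 * Rh +
      β * ((1 - p2) * V (T p1) l0 + p2 * V (T p1) l1))
    (hV : ∀ p1 p2, V p1 p2 = max (max (Vb p1 p2) (V1 p1 p2)) (V2 p1 p2))
    (hab : AffineInEach Vb) (ha1 : AffineInEach V1) (ha2 : AffineInEach V2)
    (p1 : ℝ) (hp1 : p1 ∈ Set.Icc l0 l1) :
    Vb p1 l1 ≥ V1 p1 l1 := by
  obtain ⟨hl1a, hl1b⟩ := hl1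
  obtain ⟨hl0a, hl0b⟩ := hl0
  obtain ⟨hpa, hpb⟩ := hp1
  have hp0 : 0 ≤ p1 := le_trans hl0a hpa
  have hp1' : p1 ≤ 1 := le_trans hpb hl1b
  -- convexity of V in the second coordinate
  have key : ∀ x, V x (T l1) ≤ (1 - l1) * V x l0 + l1 * V x l1 := by
    intro x
    obtain ⟨a1, c1, h1⟩ := hab.2 x
    obtain ⟨a2, c2, h2⟩ := ha1.2 x
    obtain ⟨a3, c3, h3⟩ := ha2.2 x
    rw [hV, hV, hV, hT, h1, h2, h3, h1, h2, h3, h1, h2, h3]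
    have m1 : a1 + c1 * l0 ≤ max (max (a1 + c1 * l0) (a2 + c2 * l0)) (a3 + c3 * l0) :=
      le_max_of_le_left (le_max_left _ _)
    have m2 : a2 + c2 * l0 ≤ max (max (a1 + c1 * l0) (a2 + c2 * l0)) (a3 + c3 * l0) :=
      le_max_of_le_left (le_max_right _ _)
    have m3 : a3 + c3 * l0 ≤ max (max (a1 + c1 * l0) (a2 + c2 * l0)) (a3 + c3 * l0) :=
      le_max_right _ _
    have n1 : a1 + c1 * l1 ≤ max (max (a1 + c1 * l1) (a2 + c2 * l1)) (a3 + c3 * l1) :=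
      le_max_of_le_left (le_max_left _ _)
    have n2 : a2 + c2 * l1 ≤ max (max (a1 + c1 * l1) (a2 + c2 * l1)) (a3 + c3 * l1) :=
      le_max_of_le_left (le_max_right _ _)
    have n3 : a3 + c3 * l1 ≤ max (max (a1 + c1 * l1) (a2 + c2 * l1)) (a3 + c3 * l1) :=
      le_max_right _ _
    apply max_le (max_le _ _) _ <;> nlinarith [mul_le_mul_of_nonneg_left m1 (sub_nonneg.2 hl1b),
      mul_le_mul_of_nonneg_left m2 (sub_nonneg.2 hl1b),
      mul_le_mul_of_nonneg_left m3 (sub_nonneg.2 hl1b),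
      mul_le_mul_of_nonneg_left n1 hl1a, mul_le_mul_of_nonneg_left n2 hl1a,
      mul_le_mul_of_nonneg_left n3 hl1a]
  have k0 := key l0
  have k1 := key l1
  rw [hVb, hV1]
  nlinarith [mul_nonneg (mul_nonneg hβ0 (sub_nonneg.2 hp1')) (sub_nonneg.2 k0),
    mul_nonneg (mul_nonneg hβ0 hp0) (sub_nonneg.2 k1),
    mul_nonneg (sub_nonneg.2 hpb) hRl.le,
    mul_nonneg hp0 (by linarith : (0:ℝ) ≤ 2 * Rl - Rh)]
end

section
/- In the two-channel model, for any symmetric V satisfying the Bellman equation, V(λ₀,λ₀) = V_b(λ₀,λ₀) and V(λ₁,λ₁) = V_b(λ₁,λ₁): the balanced action is optimal at the two diagonal corner beliefs (λ₀,λ₀) and (λ₁,λ₁). -/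
/-- For any symmetric `V` satisfying the Bellman equation, the
balanced action is optimal at the diagonal corners `(λ₀,λ₀)` and `(λ₁,λ₁)`. -/
theorem balanced_optimal_at_corners (l0 l1 β Rl Rh : ℝ)
    (hl0 : l0 ∈ Set.Icc (0:ℝ) 1) (hl1 : l1 ∈ Set.Icc (0:ℝ) 1) (hll : l0 ≤ l1)
    (hRl : 0 < Rl) (hRlh : Rl < Rh) (hRh : Rh < 2 * Rl)
    (hβ0 : 0 ≤ β) (hβ1 : β < 1)
(T : ℝ → ℝ) (hT : ∀ p, T p = l0 + (l1 - l0) * p)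
    (Vb V1 V2 V : ℝ → ℝ → ℝ)
    (hVb : ∀ p1 p2, Vb p1 p2 = p1 * Rl + p2 * Rl +
      β * ((1 - p1) * (1 - p2) * V l0 l0 + p1 * (1 - p2) * V l1 l0 +
        (1 - p1) * p2 * V l0 l1 + p1 * p2 * V l1 l1))
    (hV1 : ∀ p1 p2, V1 p1 p2 = p1 * Rh +
      β * ((1 - p1) * V l0 (T p2) + p1 * V l1 (T p2)))
    (hV2 : ∀ p1 p2, V2 p1 p2 = p2 * Rh +
      β * ((1 - p2) * V (T p1) l0 + p2 * V (T p1) l1))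
    (hV : ∀ p1 p2, V p1 p2 = max (max (Vb p1 p2) (V1 p1 p2)) (V2 p1 p2))
    (hsym : ∀ x y, V x y = V y x)
    (hab : AffineInEach Vb) (ha1 : AffineInEach V1) (ha2 : AffineInEach V2) :
    V l0 l0 = Vb l0 l0 ∧ V l1 l1 = Vb l1 l1 := by
  have hT' : ∀ p, T p = (1 - p) * l0 + p * l1 := by
    intro p; rw [hT]; ring
  -- convexity in the second coordinate
  have key2 : ∀ x p, 0 ≤ p → p ≤ 1 → V x (T p) ≤ (1 - p) * V x l0 + p * V x l1 := by
    intro x p hp0 hp1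
    have hle : ∀ F : ℝ → ℝ → ℝ, (∀ x, ∃ a c, ∀ y, F x y = a + c * y) →
        (∀ y, F x y ≤ V x y) → F x (T p) ≤ (1 - p) * V x l0 + p * V x l1 := by
      intro F hF hFV
      obtain ⟨a, c, hac⟩ := hF x
      have e : F x (T p) = (1 - p) * F x l0 + p * F x l1 := by
        rw [hac, hac, hac, hT']; ring
      rw [e]
      have b0 := hFV l0
      have b1 := hFV l1
      nlinarith [mul_le_mul_of_nonneg_left b0 (by linarith : (0:ℝ) ≤ 1 - p),
        mul_le_mul_of_nonneg_left b1 hp0]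
    have hVb' : ∀ y, Vb x y ≤ V x y := fun y => by
      rw [hV]; exact le_max_of_le_left (le_max_left _ _)
    have hV1' : ∀ y, V1 x y ≤ V x y := fun y => by
      rw [hV]; exact le_max_of_le_left (le_max_right _ _)
    have hV2' : ∀ y, V2 x y ≤ V x y := fun y => by
      rw [hV]; exact le_max_right _ _
    rw [hV]
    exact max_le (max_le (hle Vb hab.2 hVb') (hle V1 ha1.2 hV1')) (hle V2 ha2.2 hV2')
  -- convexity in the first coordinate
  have key1 : ∀ y p, 0 ≤ p → p ≤ 1 → V (T p) y ≤ (1 - p) * V l0 y + p * V l1 y := by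
    intro y p hp0 hp1
    have hle : ∀ F : ℝ → ℝ → ℝ, (∀ y, ∃ a c, ∀ x, F x y = a + c * x) →
        (∀ x, F x y ≤ V x y) → F (T p) y ≤ (1 - p) * V l0 y + p * V l1 y := by
      intro F hF hFV
      obtain ⟨a, c, hac⟩ := hF y
      have e : F (T p) y = (1 - p) * F l0 y + p * F l1 y := by
        rw [hac, hac, hac, hT']; ring
      rw [e]
      have b0 := hFV l0
      have b1 := hFV l1
      nlinarith [mul_le_mul_of_nonneg_left b0 (by linarith : (0:ℝ) ≤ 1 - p),
        mul_le_mul_of_nonneg_left b1 hp0]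
    have hVb' : ∀ x, Vb x y ≤ V x y := fun x => by
      rw [hV]; exact le_max_of_le_left (le_max_left _ _)
    have hV1' : ∀ x, V1 x y ≤ V x y := fun x => by
      rw [hV]; exact le_max_of_le_left (le_max_right _ _)
    have hV2' : ∀ x, V2 x y ≤ V x y := fun x => by
      rw [hV]; exact le_max_right _ _
    rw [hV]
    exact max_le (max_le (hle Vb hab.1 hVb') (hle V1 ha1.1 hV1')) (hle V2 ha2.1 hV2')
  have corner : ∀ l, 0 ≤ l → l ≤ 1 → V l l = Vb l l := by
    intro l h0 h1
    have hβl : (0:ℝ) ≤ β * (1 - l) := mul_nonneg hβ0 (by linarith)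
    have hβl' : (0:ℝ) ≤ β * l := mul_nonneg hβ0 h0
    have h1b : V1 l l ≤ Vb l l := by
      have b1 := key2 l0 l h0 h1
      have b2 := key2 l1 l h0 h1
      have c1 := mul_le_mul_of_nonneg_left b1 hβl
      have c2 := mul_le_mul_of_nonneg_left b2 hβl'
      have hR : l * Rh ≤ l * (2 * Rl) := mul_le_mul_of_nonneg_left (le_of_lt hRh) h0
      rw [hV1, hVb]
      nlinarith [c1, c2, hR]
    have h2b : V2 l l ≤ Vb l l := by
      have b1 := key1 l0 l h0 h1
      have b2 := key1 l1 l h0 h1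
      have c1 := mul_le_mul_of_nonneg_left b1 hβl
      have c2 := mul_le_mul_of_nonneg_left b2 hβl'
      have hR : l * Rh ≤ l * (2 * Rl) := mul_le_mul_of_nonneg_left (le_of_lt hRh) h0
      rw [hV2, hVb]
      nlinarith [c1, c2, hR]
    rw [hV, max_eq_left h1b, max_eq_left h2b]
  exact ⟨corner l0 hl0.1 hl0.2, corner l1 hl1.1 hl1.2⟩
end
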